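/- The number of Dyck paths of size n+1 avoiding the factor UDU equals the number of Dyck paths of size n avoiding the factor UUU. -/

import Mathlib

/-- A Dyck path of size `n`, encoded as a list of booleans (`true` = up-step `U`,
`false` = down-step `D`): length `2n`, `n` up-steps, and every prefix has at least
as many `U`'s as `D`'s. -/
def IsDyckPath (n : ℕ) (l : List Bool) : Prop :=
  l.length = 2 * n ∧ l.count true = n ∧
  ∀ p : List Bool, p <+: l → p.count false ≤ p.count true

namespace Stmt12

inductive M : Type
  | nil : M
  | flat : M → M
  | node : M → M → M

def M.size : M → ℕ
  | .nil => 0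
  | .flat b => b.size + 1
  | .node d b => d.size + b.size + 2

def encA : M → List Bool
  | .nil => [true, false]
  | .flat b => true :: (encA b ++ [false])
  | .node d b => true :: (encA d ++ false :: encA b)

def encB : M → List Bool
  | .nil => []
  | .flat b => true :: false :: encB b
  | .node d b => true :: true :: false :: (encB d ++ false :: encB b)

def Pref (l : List Bool) : Prop := ∀ p, p <+: l → p.count false ≤ p.count true

def Ok (l : List Bool) : Prop := l.count false = l.count true ∧ Pref l

lemma length_eq_counts (l : List Bool) : l.length = l.count true + l.count false := by
  induction l with
  | nil => simp
  | cons a l ih => cases a <;> simp [List.count_cons] <;> omega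

lemma prefix_append_cases : ∀ {a : List Bool} {p b}, p <+: a ++ b →
    p <+: a ∨ ∃ r, r <+: b ∧ p = a ++ r := by
  intro a
  induction a with
  | nil => intro p b h; exact Or.inr ⟨p, h, rfl⟩
  | cons x a ih =>
    intro p b h
    cases p with
    | nil => exact Or.inl (List.nil_prefix)
    | cons y q =>
      rw [List.cons_append, List.cons_prefix_cons] at h
      obtain ⟨rfl, hq⟩ := h
      rcases ih hq with h' | ⟨r, hr, rfl⟩
      · exact Or.inl (List.cons_prefix_cons.mpr ⟨rfl, h'⟩)
      · exact Or.inr ⟨r, hr, rfl⟩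

lemma prefix_cons_cases {p : List Bool} {x l} (h : p <+: x :: l) :
    p = [] ∨ ∃ q, q <+: l ∧ p = x :: q := by
  cases p with
  | nil => exact Or.inl rfl
  | cons y q =>
    rw [List.cons_prefix_cons] at h
    exact Or.inr ⟨q, h.2, h.1 ▸ rfl⟩

lemma ok_nil : Ok [] := ⟨rfl, fun p hp => by simp [List.prefix_nil.mp hp]⟩

lemma ok_append {x y : List Bool} (hx : Ok x) (hy : Ok y) : Ok (x ++ y) := by
  refine ⟨by simp [List.count_append, hx.1, hy.1], fun p hp => ?_⟩
  rcases prefix_append_cases hp with h | ⟨r, hr, rfl⟩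
  · exact hx.2 p h
  · have := hy.2 r hr
    simp only [List.count_append, hx.1]
    omega

lemma ok_wrap {x : List Bool} (hx : Ok x) : Ok (true :: (x ++ [false])) := by
  refine ⟨by simp [List.count_append, List.count_cons, hx.1], fun p hp => ?_⟩
  rcases prefix_cons_cases hp with rfl | ⟨q, hq, rfl⟩
  · simp
  · rcases prefix_append_cases hq with h | ⟨r, hr, rfl⟩
    · have := hx.2 q h
      simp [List.count_cons]; omega
    · have hr' : r = [] ∨ r = [false] := by
        rcases hr with ⟨u, hu⟩
        rcases r with _ | ⟨a, _ | _⟩ <;> simp_all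
      rcases hr' with rfl | rfl <;> simp [List.count_append, List.count_cons, hx.1]

lemma ok_head {l : List Bool} (h : Ok l) (hne : l ≠ []) : ∃ l', l = true :: l' := by
  cases l with
  | nil => exact absurd rfl hne
  | cons a l' =>
    cases a with
    | true => exact ⟨l', rfl⟩
    | false =>
      have := h.2 [false] ⟨l', rfl⟩
      simp at this

lemma split_aux : ∀ (l : List Bool) (c : ℕ),
    l.count false = l.count true + (c + 1) →
    (∀ p, p <+: l → p.count false ≤ p.count true + (c + 1)) →
    ∃ a b, l = a ++ false :: b ∧ a.count false = a.count true + c ∧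
      (∀ p, p <+: a → p.count false ≤ p.count true + c) := by
  intro l
  induction l with
  | nil => intro c h _; simp at h
  | cons x l ih =>
    intro c h hp
    cases x with
    | false =>
      cases c with
      | zero =>
        refine ⟨[], l, rfl, by simp, fun p hp' => by simp [List.prefix_nil.mp hp']⟩
      | succ c' =>
        have h' : l.count false = l.count true + (c' + 1) := by
          simp [List.count_cons] at h; omega
        have hp' : ∀ p, p <+: l → p.count false ≤ p.count true + (c' + 1) := by
          intro p hpl
          have := hp (false :: p) (List.cons_prefix_cons.mpr ⟨rfl, hpl⟩)
          simp [List.count_cons] at this; omega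
        obtain ⟨a, b, rfl, ha1, ha2⟩ := ih c' h' hp'
        refine ⟨false :: a, b, rfl, by simp [List.count_cons]; omega, ?_⟩
        intro p hpl
        rcases prefix_cons_cases hpl with rfl | ⟨q, hq, rfl⟩
        · simp
        · have := ha2 q hq
          simp [List.count_cons]; omega
    | true =>
      have h' : l.count false = l.count true + ((c + 1) + 1) := by
        simp [List.count_cons] at h; omega
      have hp' : ∀ p, p <+: l → p.count false ≤ p.count true + ((c + 1) + 1) := by
        intro p hpl
        have := hp (true :: p) (List.cons_prefix_cons.mpr ⟨rfl, hpl⟩)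
        simp [List.count_cons] at this; omega
      obtain ⟨a, b, rfl, ha1, ha2⟩ := ih (c + 1) h' hp'
      refine ⟨true :: a, b, rfl, by simp [List.count_cons]; omega, ?_⟩
      intro p hpl
      rcases prefix_cons_cases hpl with rfl | ⟨q, hq, rfl⟩
      · simp
      · have := ha2 q hq
        simp [List.count_cons]; omega

lemma dyck_split {l : List Bool} (h : Ok l) (hne : l ≠ []) :
    ∃ a b, l = true :: (a ++ false :: b) ∧ Ok a ∧ Ok b := by
  obtain ⟨l', rfl⟩ := ok_head h hne
  have h1 : l'.count false = l'.count true + (0 + 1) := by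
    have := h.1; simp [List.count_cons] at this; omega
  have h2 : ∀ p, p <+: l' → p.count false ≤ p.count true + (0 + 1) := by
    intro p hpl
    have := h.2 (true :: p) (List.cons_prefix_cons.mpr ⟨rfl, hpl⟩)
    simp [List.count_cons] at this; omega
  obtain ⟨a, b, rfl, ha1, ha2⟩ := split_aux l' 0 h1 h2
  simp only [Nat.add_zero] at ha1
  refine ⟨a, b, rfl, ⟨ha1, fun p hp => by simpa using ha2 p hp⟩, ?_, ?_⟩
  · have htot := h.1
    simp [List.count_cons, List.count_append] at htot
    omega
  · intro p hp
    have hpre : (true :: (a ++ false :: p)) <+: (true :: (a ++ false :: b)) := by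
      rcases hp with ⟨u, hu⟩
      exact ⟨u, by simp [← hu]⟩
    have := h.2 _ hpre
    simp [List.count_cons, List.count_append] at this
    omega

lemma split_unique_aux {a a' b b' : List Bool} (ha : Ok a) (ha' : Ok a')
    (hpre : a <+: a') (h : a ++ false :: b = a' ++ false :: b') : a = a' ∧ b = b' := by
  obtain ⟨c, rfl⟩ := hpre
  cases c with
  | nil =>
    simp only [List.append_nil] at h
    have h3 := List.append_cancel_left h
    injection h3 with _ h4
    exact ⟨by simp, h4⟩
  | cons x c' =>
    exfalso
    have h2 : false :: b = (x :: c') ++ false :: b' := by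
      rw [List.append_assoc] at h
      exact List.append_cancel_left h
    have hx : x = false := by
      simpa using congrArg List.head? h2
    subst hx
    have hpre2 : (a ++ [false]) <+: (a ++ false :: c') := ⟨c', by simp⟩
    have := ha'.2 _ hpre2
    simp [List.count_append, List.count_cons, ha.1] at this

lemma split_unique {a a' b b' : List Bool} (ha : Ok a) (ha' : Ok a')
    (h : a ++ false :: b = a' ++ false :: b') : a = a' ∧ b = b' := by
  have h1 : a <+: a' ++ false :: b' := ⟨false :: b, h⟩
  have h2 : a' <+: a' ++ false :: b' := ⟨false :: b', rfl⟩
  rcases List.prefix_or_prefix_of_prefix h1 h2 with hp | hp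
  · exact split_unique_aux ha ha' hp h
  · obtain ⟨he, he'⟩ := split_unique_aux ha' ha hp h.symm
    exact ⟨he.symm, he'.symm⟩

end Stmt12
namespace Stmt12

lemma encA_ne_nil (m : M) : encA m ≠ [] := by
  cases m <;> simp [encA]

lemma encA_head (m : M) : ∃ z, encA m = true :: z := by
  cases m <;> simp [encA]

lemma encA_concat (m : M) : ∃ z, encA m = z ++ [false] := by
  induction m with
  | nil => exact ⟨[true], rfl⟩
  | flat b ih => exact ⟨true :: encA b, rfl⟩
  | node d b ihd ihb =>
    obtain ⟨z, hz⟩ := ihb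
    exact ⟨true :: (encA d ++ false :: z), by simp [encA, hz]⟩

lemma encB_ne_nil_head {m : M} (h : encB m ≠ []) : ∃ z, encB m = true :: z := by
  cases m <;> simp [encB] at h ⊢

lemma ok_encA (m : M) : Ok (encA m) := by
  induction m with
  | nil => exact ok_wrap ok_nil
  | flat b ih => exact ok_wrap ih
  | node d b ihd ihb =>
    have h := ok_append (ok_wrap ihd) ihb
    have he : (true :: (encA d ++ [false])) ++ encA b = encA (M.node d b) := by
      simp [encA]
    rwa [he] at h

lemma ok_encB (m : M) : Ok (encB m) := by
  induction m with
  | nil => exact ok_nil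
  | flat b ih =>
    have h := ok_append (ok_wrap ok_nil) ih
    have he : (true :: ([] ++ [false])) ++ encB b = encB (M.flat b) := by
      simp [encB]
    rwa [he] at h
  | node d b ihd ihb =>
    have h := ok_append (ok_wrap (ok_append (ok_wrap ok_nil) ihd)) ihb
    have he : (true :: (((true :: ([] ++ [false])) ++ encB d) ++ [false])) ++ encB b
        = encB (M.node d b) := by simp [encB]
    rwa [he] at h

lemma count_encA (m : M) : (encA m).count true = m.size + 1 := by
  induction m with
  | nil => rfl
  | flat b ih => simp [encA, M.size, List.count_cons, List.count_append, ih]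
  | node d b ihd ihb =>
    simp [encA, M.size, List.count_cons, List.count_append, ihd, ihb]
    omega

lemma count_encB (m : M) : (encB m).count true = m.size := by
  induction m with
  | nil => rfl
  | flat b ih => simp [encB, M.size, List.count_cons, List.count_append, ih]
  | node d b ihd ihb =>
    simp [encB, M.size, List.count_cons, List.count_append, ihd, ihb]

lemma eq_three_split {w1 w2 : List Bool} {a b c : Bool} (h : w1 ++ w2 = [a, b, c])
    (h1 : w1 ≠ []) (h2 : w2 ≠ []) :
    (w1 = [a] ∧ w2 = [b, c]) ∨ (w1 = [a, b] ∧ w2 = [c]) := by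
  rcases w1 with _ | ⟨x, _ | ⟨y, _ | ⟨z, w⟩⟩⟩ <;> simp_all

lemma infix_append_cases {w x y : List Bool} (h : w <:+: x ++ y) :
    w <:+: x ∨ w <:+: y ∨
      ∃ w1 w2, w = w1 ++ w2 ∧ w1 ≠ [] ∧ w2 ≠ [] ∧ w1 <:+ x ∧ w2 <+: y := by
  obtain ⟨s, t, hst⟩ := h
  have hpre : s ++ w <+: x ++ y := ⟨t, by simpa [List.append_assoc] using hst⟩
  rcases prefix_append_cases hpre with h1 | ⟨r, hr, h2⟩
  · left
    exact (List.suffix_append s w).isInfix.trans h1.isInfix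
  · have hx : x <+: x ++ r := ⟨r, rfl⟩
    have hs : s <+: x ++ r := ⟨w, h2⟩
    rcases List.prefix_or_prefix_of_prefix hs hx with hsx | hxs
    · obtain ⟨x2, rfl⟩ := hsx
      have hw : w = x2 ++ r := by
        rw [List.append_assoc] at h2
        exact List.append_cancel_left h2
      rcases eq_or_ne x2 [] with rfl | hx2
      · right; left
        exact hw ▸ hr.isInfix
      · rcases eq_or_ne r [] with rfl | hrne
        · left
          simp only [List.append_nil] at hw
          exact hw ▸ (List.suffix_append s x2).isInfix
        · right; right
          exact ⟨x2, r, hw, hx2, hrne, ⟨s, rfl⟩, hr⟩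
    · obtain ⟨s2, rfl⟩ := hxs
      right; left
      have hw : s2 ++ w = r := by
        rw [List.append_assoc] at h2
        exact List.append_cancel_left h2
      exact ((List.suffix_append s2 w).trans (hw ▸ List.suffix_rfl)).isInfix.trans hr.isInfix

lemma head?_of_prefix {p l : List Bool} (h : p <+: l) (hp : p ≠ []) : l.head? = p.head? := by
  obtain ⟨u, rfl⟩ := h
  cases p with
  | nil => exact absurd rfl hp
  | cons a q => simp

lemma ends_true_ne_ends_false {u z : List Bool} (h : u ++ [true] = z ++ [false]) : False := by
  have h2 := (List.getLast?_concat (l := u)).symm.trans (congrArg List.getLast? h)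
  rw [List.getLast?_concat] at h2
  simp at h2

lemma encB_no_uuu (m : M) : ¬ ([true, true, true] <:+: encB m) := by
  induction m with
  | nil => simp [encB]
  | flat b ih =>
    intro h
    have h' : [true, true, true] <:+: [true, false] ++ encB b := h
    rcases infix_append_cases h' with h1 | h1 | ⟨w1, w2, heq, hn1, hn2, hs, hp⟩
    · exact absurd h1 (by decide)
    · exact ih h1
    · rcases eq_three_split heq.symm hn1 hn2 with ⟨rfl, rfl⟩ | ⟨rfl, rfl⟩
      · exact absurd hs (by decide)
      · exact absurd hs (by decide)
  | node d b ihd ihb =>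
    intro h
    have h' : [true, true, true] <:+: [true, true, false] ++ (encB d ++ ([false] ++ encB b)) := by
      simpa [encB] using h
    rcases infix_append_cases h' with h1 | h1 | ⟨w1, w2, heq, hn1, hn2, hs, hp⟩
    · exact absurd h1 (by decide)
    · rcases infix_append_cases h1 with h2 | h2 | ⟨w1, w2, heq, hn1, hn2, hs, hp⟩
      · exact ihd h2
      · rcases infix_append_cases h2 with h3 | h3 | ⟨w1, w2, heq, hn1, hn2, hs, hp⟩
        · exact absurd h3 (by decide)
        · exact ihb h3
        · rcases eq_three_split heq.symm hn1 hn2 with ⟨rfl, rfl⟩ | ⟨rfl, rfl⟩ <;>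
            exact absurd hs (by decide)
      · rcases eq_three_split heq.symm hn1 hn2 with ⟨rfl, rfl⟩ | ⟨rfl, rfl⟩ <;>
          · have := head?_of_prefix hp (by simp)
            simp at this
    · rcases eq_three_split heq.symm hn1 hn2 with ⟨rfl, rfl⟩ | ⟨rfl, rfl⟩ <;>
        exact absurd hs (by decide)

lemma encA_no_udu (m : M) : ¬ ([true, false, true] <:+: encA m) := by
  induction m with
  | nil => exact (by decide : ¬ ([true, false, true] <:+: [true, false]))
  | flat b ih =>
    intro h
    have h' : [true, false, true] <:+: [true] ++ (encA b ++ [false]) := by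
      simpa [encA] using h
    rcases infix_append_cases h' with h1 | h1 | ⟨w1, w2, heq, hn1, hn2, hs, hp⟩
    · exact absurd h1 (by decide)
    · rcases infix_append_cases h1 with h2 | h2 | ⟨w1, w2, heq, hn1, hn2, hs, hp⟩
      · exact ih h2
      · exact absurd h2 (by decide)
      · rcases eq_three_split heq.symm hn1 hn2 with ⟨rfl, rfl⟩ | ⟨rfl, rfl⟩
        · rcases hp with ⟨u, hu⟩; simp at hu
        · rcases hp with ⟨u, hu⟩; simp at hu
    · rcases eq_three_split heq.symm hn1 hn2 with ⟨rfl, rfl⟩ | ⟨rfl, rfl⟩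
      · obtain ⟨z, hz⟩ := encA_head b
        have := head?_of_prefix hp (by simp)
        rw [hz] at this
        simp at this
      · exact absurd hs (by decide)
  | node d b ihd ihb =>
    intro h
    have h' : [true, false, true] <:+: [true] ++ (encA d ++ ([false] ++ encA b)) := by
      simpa [encA] using h
    rcases infix_append_cases h' with h1 | h1 | ⟨w1, w2, heq, hn1, hn2, hs, hp⟩
    · exact absurd h1 (by decide)
    · rcases infix_append_cases h1 with h2 | h2 | ⟨w1, w2, heq, hn1, hn2, hs, hp⟩
      · exact ihd h2
      · rcases infix_append_cases h2 with h3 | h3 | ⟨w1, w2, heq, hn1, hn2, hs, hp⟩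
        · exact absurd h3 (by decide)
        · exact ihb h3
        · rcases eq_three_split heq.symm hn1 hn2 with ⟨rfl, rfl⟩ | ⟨rfl, rfl⟩
          · rcases hs with ⟨u, hu⟩
            exact ends_true_ne_ends_false (z := []) (by simpa using hu)
          · rcases hs with ⟨u, hu⟩
            have := congrArg List.length hu
            simp at this
      · rcases eq_three_split heq.symm hn1 hn2 with ⟨rfl, rfl⟩ | ⟨rfl, rfl⟩
        · obtain ⟨z, hz⟩ := encA_concat d
          rcases hs with ⟨u, hu⟩
          rw [hz] at hu
          have h5 := (List.getLast?_concat (l := u)).symm.trans (congrArg List.getLast? hu)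
          rw [List.getLast?_concat] at h5
          simp at h5
        · have := head?_of_prefix hp (by simp)
          simp at this
    · rcases eq_three_split heq.symm hn1 hn2 with ⟨rfl, rfl⟩ | ⟨rfl, rfl⟩
      · obtain ⟨z, hz⟩ := encA_head d
        have := head?_of_prefix hp (by simp)
        rw [hz] at this
        simp at this
      · rcases hs with ⟨u, hu⟩
        have := congrArg List.length hu
        simp at this

end Stmt12
namespace Stmt12

lemma encB_ne_nil_flat (b : M) : encB (M.flat b) ≠ [] := by simp [encB]
lemma encB_ne_nil_node (d b : M) : encB (M.node d b) ≠ [] := by simp [encB]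

lemma encA_inj : Function.Injective encA := by
  intro m
  induction m with
  | nil =>
    intro m' h
    cases m' with
    | nil => rfl
    | flat b' =>
      exfalso
      simp only [encA] at h
      injection h with _ h2
      have : ([] : List Bool) ++ false :: [] = encA b' ++ false :: [] := by simpa using h2
      obtain ⟨he, _⟩ := split_unique ok_nil (ok_encA b') this
      exact encA_ne_nil b' he.symm
    | node d' b' =>
      exfalso
      simp only [encA] at h
      injection h with _ h2
      have : ([] : List Bool) ++ false :: [] = encA d' ++ false :: encA b' := by simpa using h2
      obtain ⟨he, _⟩ := split_unique ok_nil (ok_encA d') this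
      exact encA_ne_nil d' he.symm
  | flat b ih =>
    intro m' h
    cases m' with
    | nil =>
      exfalso
      simp only [encA] at h
      injection h with _ h2
      have : encA b ++ false :: [] = ([] : List Bool) ++ false :: [] := by simpa using h2
      obtain ⟨he, _⟩ := split_unique (ok_encA b) ok_nil this
      exact encA_ne_nil b he
    | flat b' =>
      simp only [encA] at h
      injection h with _ h2
      have : encA b ++ false :: [] = encA b' ++ false :: [] := by simpa using h2
      obtain ⟨he, _⟩ := split_unique (ok_encA b) (ok_encA b') this
      rw [ih he]
    | node d' b' =>
      exfalso
      simp only [encA] at h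
      injection h with _ h2
      have : encA b ++ false :: [] = encA d' ++ false :: encA b' := by simpa using h2
      obtain ⟨_, he2⟩ := split_unique (ok_encA b) (ok_encA d') this
      exact encA_ne_nil b' he2.symm
  | node d b ihd ihb =>
    intro m' h
    cases m' with
    | nil =>
      exfalso
      simp only [encA] at h
      injection h with _ h2
      have : encA d ++ false :: encA b = ([] : List Bool) ++ false :: [] := by simpa using h2
      obtain ⟨_, he2⟩ := split_unique (ok_encA d) ok_nil this
      exact encA_ne_nil b he2
    | flat b' =>
      exfalso
      simp only [encA] at h
      injection h with _ h2
      have : encA d ++ false :: encA b = encA b' ++ false :: [] := by simpa using h2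
      obtain ⟨_, he2⟩ := split_unique (ok_encA d) (ok_encA b') this
      exact encA_ne_nil b he2
    | node d' b' =>
      simp only [encA] at h
      injection h with _ h2
      obtain ⟨he1, he2⟩ := split_unique (ok_encA d) (ok_encA d') h2
      rw [ihd he1, ihb he2]

lemma encB_inj : Function.Injective encB := by
  intro m
  induction m with
  | nil =>
    intro m' h
    cases m' with
    | nil => rfl
    | flat b' => exact absurd h.symm (encB_ne_nil_flat b')
    | node d' b' => exact absurd h.symm (encB_ne_nil_node d' b')
  | flat b ih =>
    intro m' h
    cases m' with
    | nil => exact absurd h (encB_ne_nil_flat b)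
    | flat b' =>
      simp only [encB] at h
      injection h with _ h2
      injection h2 with _ h3
      rw [ih h3]
    | node d' b' =>
      exfalso
      simp only [encB] at h
      injection h with _ h2
      injection h2 with h3 _
      exact Bool.noConfusion h3
  | node d b ihd ihb =>
    intro m' h
    cases m' with
    | nil => exact absurd h (encB_ne_nil_node d b)
    | flat b' =>
      exfalso
      simp only [encB] at h
      injection h with _ h2
      injection h2 with h3 _
      exact Bool.noConfusion h3
    | node d' b' =>
      simp only [encB] at h
      injection h with _ h2
      injection h2 with _ h3
      injection h3 with _ h4
      obtain ⟨he1, he2⟩ := split_unique (ok_encB d) (ok_encB d') h4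
      rw [ihd he1, ihb he2]

lemma encB_surj : ∀ (N : ℕ) (l : List Bool), l.length ≤ N → Ok l →
    ¬ ([true, true, true] <:+: l) → ∃ m : M, encB m = l := by
  intro N
  induction N with
  | zero =>
    intro l hl _ _
    have : l = [] := List.eq_nil_of_length_eq_zero (Nat.le_zero.mp hl)
    exact ⟨M.nil, this.symm⟩
  | succ N ih =>
    intro l hl hok havoid
    rcases eq_or_ne l [] with rfl | hne
    · exact ⟨M.nil, rfl⟩
    obtain ⟨a, b, rfl, hoka, hokb⟩ := dyck_split hok hne
    have hlen : a.length + b.length + 2 ≤ N + 1 := by simp at hl; omega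
    have hbavoid : ¬ ([true, true, true] <:+: b) := by
      intro hc
      exact havoid (hc.trans ⟨true :: (a ++ [false]), [], by simp⟩)
    rcases eq_or_ne a [] with rfl | hane
    · obtain ⟨mb, hmb⟩ := ih b (by omega) hokb hbavoid
      exact ⟨M.flat mb, by simp [encB, hmb]⟩
    · obtain ⟨a1, b1, rfl, hoka1, hokb1⟩ := dyck_split hoka hane
      rcases eq_or_ne a1 [] with rfl | ha1ne
      · have hb1avoid : ¬ ([true, true, true] <:+: b1) := by
          intro hc
          exact havoid (hc.trans ⟨[true, true, false], false :: b, by simp⟩)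
        have hlen2 : b1.length + b.length + 4 ≤ N + 1 := by simp at hl; omega
        obtain ⟨m1, hm1⟩ := ih b1 (by omega) hokb1 hb1avoid
        obtain ⟨m2, hm2⟩ := ih b (by omega) hokb hbavoid
        exact ⟨M.node m1 m2, by simp [encB, hm1, hm2]⟩
      · exfalso
        obtain ⟨a1', rfl⟩ := ok_head hoka1 ha1ne
        exact havoid ⟨[], (a1' ++ false :: b1) ++ false :: b, by simp⟩

lemma encA_surj : ∀ (N : ℕ) (l : List Bool), l.length ≤ N → Ok l → l ≠ [] →
    ¬ ([true, false, true] <:+: l) → ∃ m : M, encA m = l := by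
  intro N
  induction N with
  | zero =>
    intro l hl _ hne _
    exact absurd (List.eq_nil_of_length_eq_zero (Nat.le_zero.mp hl)) hne
  | succ N ih =>
    intro l hl hok hne havoid
    obtain ⟨a, b, rfl, hoka, hokb⟩ := dyck_split hok hne
    have hlen : a.length + b.length + 2 ≤ N + 1 := by simp at hl; omega
    rcases eq_or_ne b [] with rfl | hbne
    · rcases eq_or_ne a [] with rfl | hane
      · exact ⟨M.nil, rfl⟩
      · have haavoid : ¬ ([true, false, true] <:+: a) := by
          intro hc
          exact havoid (hc.trans ⟨[true], false :: [], by simp⟩)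
        obtain ⟨ma, hma⟩ := ih a (by omega) hoka hane haavoid
        exact ⟨M.flat ma, by simp [encA, hma]⟩
    · rcases eq_or_ne a [] with rfl | hane
      · exfalso
        obtain ⟨b', rfl⟩ := ok_head hokb hbne
        exact havoid ⟨[], b', by simp⟩
      · have haavoid : ¬ ([true, false, true] <:+: a) := by
          intro hc
          exact havoid (hc.trans ⟨[true], false :: b, by simp⟩)
        have hbavoid : ¬ ([true, false, true] <:+: b) := by
          intro hc
          exact havoid (hc.trans ⟨true :: (a ++ [false]), [], by simp⟩)
        obtain ⟨ma, hma⟩ := ih a (by omega) hoka hane haavoid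
        obtain ⟨mb, hmb⟩ := ih b (by omega) hokb hbne hbavoid
        exact ⟨M.node ma mb, by simp [encA, hma, hmb]⟩

lemma isDyck_iff {n : ℕ} {l : List Bool} :
    IsDyckPath n l ↔ Ok l ∧ l.count true = n := by
  constructor
  · rintro ⟨h1, h2, h3⟩
    have := length_eq_counts l
    exact ⟨⟨by omega, h3⟩, h2⟩
  · rintro ⟨⟨h1, h2⟩, h3⟩
    have := length_eq_counts l
    exact ⟨by omega, h3, h2⟩

lemma setA_eq (n : ℕ) :
    {l : List Bool | IsDyckPath (n + 1) l ∧ ¬ ([true, false, true] <:+: l)}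
      = encA '' {m : M | m.size = n} := by
  ext l
  simp only [Set.mem_setOf_eq, Set.mem_image]
  constructor
  · rintro ⟨hd, havoid⟩
    obtain ⟨hok, hcount⟩ := isDyck_iff.mp hd
    have hne : l ≠ [] := by
      intro hc
      rw [hc] at hcount
      simp at hcount
    obtain ⟨m, hm⟩ := encA_surj l.length l le_rfl hok hne havoid
    refine ⟨m, ?_, hm⟩
    have := count_encA m
    rw [hm, hcount] at this
    omega
  · rintro ⟨m, hm, rfl⟩
    refine ⟨isDyck_iff.mpr ⟨ok_encA m, by rw [count_encA, hm]⟩, encA_no_udu m⟩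

lemma setB_eq (n : ℕ) :
    {l : List Bool | IsDyckPath n l ∧ ¬ ([true, true, true] <:+: l)}
      = encB '' {m : M | m.size = n} := by
  ext l
  simp only [Set.mem_setOf_eq, Set.mem_image]
  constructor
  · rintro ⟨hd, havoid⟩
    obtain ⟨hok, hcount⟩ := isDyck_iff.mp hd
    obtain ⟨m, hm⟩ := encB_surj l.length l le_rfl hok havoid
    refine ⟨m, ?_, hm⟩
    have := count_encB m
    rw [hm, hcount] at this
    exact this.symm
  · rintro ⟨m, hm, rfl⟩
    exact ⟨isDyck_iff.mpr ⟨ok_encB m, by rw [count_encB, hm]⟩, encB_no_uuu m⟩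

end Stmt12

theorem stmt12 (n : ℕ) :
    Set.ncard {l : List Bool | IsDyckPath (n + 1) l ∧ ¬ ([true, false, true] <:+: l)}
      = Set.ncard {l : List Bool | IsDyckPath n l ∧ ¬ ([true, true, true] <:+: l)} := by
  rw [Stmt12.setA_eq, Stmt12.setB_eq,
    Set.ncard_image_of_injective _ Stmt12.encA_inj,
    Set.ncard_image_of_injective _ Stmt12.encB_inj]
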